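/- arXiv:2508.13472 — 3 statements merged into one kernel-verified Lean document; each statement's English description precedes it below -/
import Mathlib

section
/- Let A be an n×n complex matrix that is Hermitian and positive semidefinite. Then the real part of the permanent of A, namely Re(∑_{σ ∈ S_n} ∏_{i=1}^n A_{i, σ(i)}), is at least the product of the diagonal entries: Re(∑_{σ ∈ S_n} ∏_{i=1}^n A_{i, σ(i)}) ≥ ∏_{i=1}^n Re(A_{i i}). (Marcus's permanent analogue of the Hadamard inequality, used by the paper as the special case of Conjecture D where one equivalence relation is discrete and the other indiscrete.) -/
open Matrix Finset
open scoped ComplexOrder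

noncomputable section

namespace MarcusAux


/-- inner product on `Fin d → ℂ`, conjugate-linear in the first argument. -/
def ip {d : ℕ} (x y : Fin d → ℂ) : ℂ := ∑ s, (starRingEnd ℂ) (x s) * y s

/-- permanent of the mixed Gram matrix of two families of vectors. -/
def P {d m : ℕ} (u w : Fin m → Fin d → ℂ) : ℂ :=
  ∑ σ : Equiv.Perm (Fin m), ∏ i, ip (u i) (w (σ i))

/-- symmetrized tensor -/
def T {d m : ℕ} (u : Fin m → Fin d → ℂ) (f : Fin m → Fin d) : ℂ :=
  ∑ σ : Equiv.Perm (Fin m), ∏ i, u (σ i) (f i)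

lemma ip_self_im {d : ℕ} (x : Fin d → ℂ) : (ip x x).im = 0 := by
  simp [ip, Complex.im_sum, Complex.mul_im]
  ring_nf
  simp [mul_comm]

lemma ip_self_re_nonneg {d : ℕ} (x : Fin d → ℂ) : 0 ≤ (ip x x).re := by
  rw [ip, Complex.re_sum]
  refine Finset.sum_nonneg fun s _ => ?_
  simp [Complex.mul_re]
  nlinarith [sq_nonneg ((x s).re), sq_nonneg ((x s).im)]

lemma tensor_inner {d m : ℕ} (u w : Fin m → Fin d → ℂ) :
    ∑ f : Fin m → Fin d, (starRingEnd ℂ) (T u f) * T w f = (Nat.factorial m : ℂ) * P u w := by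
  unfold T
  simp only [map_sum, Finset.sum_mul, Finset.mul_sum, map_prod]
  rw [Finset.sum_comm]
  have h1 : ∀ σ τ : Equiv.Perm (Fin m),
      ∑ f : Fin m → Fin d, (∏ i, (starRingEnd ℂ) (u (σ i) (f i))) * ∏ i, w (τ i) (f i)
        = ∏ i, ip (u (σ i)) (w (τ i)) := by
    intro σ τ
    have : ∀ f : Fin m → Fin d,
        (∏ i, (starRingEnd ℂ) (u (σ i) (f i))) * ∏ i, w (τ i) (f i)
          = ∏ i, ((starRingEnd ℂ) (u (σ i) (f i)) * w (τ i) (f i)) := by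
      intro f; rw [Finset.prod_mul_distrib]
    simp only [this]
    rw [← Fintype.prod_sum fun i s => (starRingEnd ℂ) (u (σ i) s) * w (τ i) s]
    rfl
  have h2 : ∀ y : Equiv.Perm (Fin m),
      (∑ x : Fin m → Fin d, ∑ i : Equiv.Perm (Fin m),
        (∏ x_1 : Fin m, (starRingEnd ℂ) (u (i x_1) (x x_1))) * ∏ i : Fin m, w (y i) (x i))
        = ∑ σ : Equiv.Perm (Fin m), ∏ i, ip (u (σ i)) (w (y i)) := by
    intro y
    rw [Finset.sum_comm]
    exact Finset.sum_congr rfl fun σ _ => h1 σ y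
  simp only [h2]
  rw [Finset.sum_comm]
  have h3 : ∀ σ : Equiv.Perm (Fin m),
      (∑ y : Equiv.Perm (Fin m), ∏ i, ip (u (σ i)) (w (y i))) = P u w := by
    intro σ
    rw [show P u w = ∑ y : Equiv.Perm (Fin m),
        ∏ j, ip (u j) (w ((Equiv.mulRight σ⁻¹ y) j)) from ?_]
    · exact Finset.sum_congr rfl fun y _ => by
        rw [← Equiv.prod_comp σ (fun j => ip (u j) (w ((Equiv.mulRight σ⁻¹ y) j)))]
        exact Finset.prod_congr rfl fun i _ => by simp
    · rw [Equiv.sum_comp (Equiv.mulRight σ⁻¹)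
        (fun ρ => ∏ j, ip (u j) (w (ρ j)))]
      rfl
  simp only [h3, Finset.sum_const, Finset.card_univ, Fintype.card_perm, Fintype.card_fin,
    nsmul_eq_mul]


lemma quad_eq {r : ℕ} {κ : Type*} [Fintype κ] (c : Fin r → ℂ) (X : Fin r → κ → ℂ) :
    ∑ j, ∑ k, (starRingEnd ℂ) (c j) * c k * ∑ f, (starRingEnd ℂ) (X j f) * X k f
      = ∑ f, (starRingEnd ℂ) (∑ j, c j * X j f) * (∑ k, c k * X k f) := by
  have R : ∀ f : κ, (starRingEnd ℂ) (∑ j, c j * X j f) * (∑ k, c k * X k f)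
      = ∑ j, ∑ k, (starRingEnd ℂ) (c j) * c k *
          ((starRingEnd ℂ) (X j f) * X k f) := by
    intro f
    simp only [map_sum, _root_.map_mul, Finset.sum_mul, Finset.mul_sum]
    rw [Finset.sum_comm]
    exact Finset.sum_congr rfl fun j _ => Finset.sum_congr rfl fun k _ => by ring
  simp only [R, Finset.mul_sum]
  conv_rhs => rw [Finset.sum_comm]
  refine Finset.sum_congr rfl fun j _ => ?_
  conv_rhs => rw [Finset.sum_comm]

def ins {m : ℕ} (k j : Fin (m+1)) (π : Equiv.Perm (Fin m)) : Equiv.Perm (Fin (m+1)) :=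
  ((finSuccEquiv' j).trans (Equiv.optionCongr π)).trans (finSuccEquiv' k).symm

@[simp] lemma ins_self {m : ℕ} (k j : Fin (m+1)) (π : Equiv.Perm (Fin m)) :
    ins k j π j = k := by simp [ins]

@[simp] lemma ins_succAbove {m : ℕ} (k j : Fin (m+1)) (π : Equiv.Perm (Fin m)) (i : Fin m) :
    ins k j π (j.succAbove i) = k.succAbove (π i) := by simp [ins]

lemma ins_bijective {m : ℕ} (k : Fin (m+1)) :
    Function.Bijective (fun p : Fin (m+1) × Equiv.Perm (Fin m) => ins k p.1 p.2) := by
  rw [Fintype.bijective_iff_injective_and_card]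
  constructor
  · rintro ⟨j, π⟩ ⟨j', π'⟩ h
    simp only at h
    have hj : j = j' := by
      apply (ins k j' π').injective
      have h2 : ins k j' π' j' = k := ins_self _ _ _
      rw [h2, ← h, ins_self]
    subst hj
    have hπ : π = π' := by
      ext i
      have : ins k j π (j.succAbove i) = ins k j π' (j.succAbove i) := by rw [h]
      rw [ins_succAbove, ins_succAbove] at this
      exact congrArg Fin.val (Fin.succAbove_right_injective this)
    rw [hπ]
  · simp [Fintype.card_perm, Nat.factorial_succ]


lemma P_expand {d m : ℕ} (v : Fin (m+2) → Fin d → ℂ) :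
    P v v = ip (v 0) (v 0) * P (v ∘ Fin.succ) (v ∘ Fin.succ)
      + ∑ k : Fin (m+1), ∑ j : Fin (m+1),
          ip (v 0) (v k.succ) * ip (v j.succ) (v 0) *
            P (fun i => v ((j.succAbove i).succ)) (fun i => v ((k.succAbove i).succ)) := by
  have hsum := Equiv.sum_comp (Equiv.Perm.decomposeFin.symm :
      Fin (m+2) × Equiv.Perm (Fin (m+1)) ≃ Equiv.Perm (Fin (m+2)))
      (fun σ => ∏ i, ip (v i) (v (σ i)))
  rw [show P v v = ∑ σ : Equiv.Perm (Fin (m+2)), ∏ i, ip (v i) (v (σ i)) from rfl, ← hsum]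
  rw [Fintype.sum_prod_type, Fin.sum_univ_succ]
  congr 1
  · -- p = 0 term
    have : ∀ e : Equiv.Perm (Fin (m+1)),
        ∏ i, ip (v i) (v (Equiv.Perm.decomposeFin.symm ((0 : Fin (m+2)), e) i))
          = ip (v 0) (v 0) * ∏ i : Fin (m+1), ip (v i.succ) (v ((e i).succ)) := by
      intro e
      rw [Fin.prod_univ_succ]
      simp [Equiv.Perm.decomposeFin_symm_apply_zero, Equiv.Perm.decomposeFin_symm_apply_succ]
    simp only [this]
    rw [← Finset.mul_sum]
    rfl
  · -- p = k.succ terms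
    refine Finset.sum_congr rfl fun k _ => ?_
    rw [← Fintype.sum_bijective _ (ins_bijective k)
      (fun p : Fin (m+1) × Equiv.Perm (Fin m) =>
        ∏ i, ip (v i) (v (Equiv.Perm.decomposeFin.symm ((k.succ : Fin (m+2)), ins k p.1 p.2) i)))
      (fun e => ∏ i, ip (v i) (v (Equiv.Perm.decomposeFin.symm ((k.succ : Fin (m+2)), e) i)))
      (fun p => rfl)]
    rw [Fintype.sum_prod_type]
    refine Finset.sum_congr rfl fun j _ => ?_
    have key : ∀ π : Equiv.Perm (Fin m),
        ∏ i, ip (v i) (v (Equiv.Perm.decomposeFin.symm ((k.succ : Fin (m+2)), ins k j π) i))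
          = ip (v 0) (v k.succ) * ip (v j.succ) (v 0) *
              ∏ i : Fin m, ip (v ((j.succAbove i).succ)) (v ((k.succAbove (π i)).succ)) := by
      intro π
      rw [Fin.prod_univ_succ]
      rw [Fin.prod_univ_succAbove (fun i : Fin (m+1) =>
        ip (v i.succ) (v (Equiv.Perm.decomposeFin.symm ((k.succ : Fin (m+2)), ins k j π) i.succ))) j]
      simp only [Equiv.Perm.decomposeFin_symm_apply_zero, Equiv.Perm.decomposeFin_symm_apply_succ,
        ins_self, ins_succAbove]
      rw [Equiv.swap_apply_right]
      have hne : ∀ i : Fin m, Equiv.swap (0 : Fin (m+2)) k.succ ((k.succAbove (π i)).succ)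
          = (k.succAbove (π i)).succ := by
        intro i
        apply Equiv.swap_apply_of_ne_of_ne
        · exact Fin.succ_ne_zero _
        · simpa using (Fin.succAbove_ne k (π i))
      simp only [hne]
      ring
    simp only [key]
    rw [← Finset.mul_sum]
    rfl


lemma ip_conj {d : ℕ} (x y : Fin d → ℂ) : (starRingEnd ℂ) (ip x y) = ip y x := by
  simp [ip, mul_comm]

theorem main : (n : ℕ) → (d : ℕ) → (v : Fin n → Fin d → ℂ) →
    ∏ i, (ip (v i) (v i)).re ≤ (P v v).re
  | 0, d, v => by
    simp [P]
  | 1, d, v => by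
    have h1 : ∀ σ : Equiv.Perm (Fin 1), σ = 1 := fun σ => Subsingleton.elim _ _
    simp [P, h1, Fin.prod_univ_one]
  | (m+2), d, v => by
    have ih := main (m+1) d (v ∘ Fin.succ)
    rw [P_expand, Complex.add_re, Complex.mul_re, ip_self_im, zero_mul, sub_zero]
    set Q : ℂ := ∑ k : Fin (m+1), ∑ j : Fin (m+1),
          ip (v 0) (v k.succ) * ip (v j.succ) (v 0) *
            P (fun i => v ((j.succAbove i).succ)) (fun i => v ((k.succAbove i).succ)) with hQdef
    have hQ : 0 ≤ Q.re := by
      set c : Fin (m+1) → ℂ := fun j => ip (v 0) (v j.succ) with hc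
      set X : Fin (m+1) → (Fin m → Fin d) → ℂ :=
        fun j => T (fun i => v ((j.succAbove i).succ)) with hX
      have e1 : ∀ j k : Fin (m+1),
          (starRingEnd ℂ) (c j) * c k * ∑ f, (starRingEnd ℂ) (X j f) * X k f
            = (m.factorial : ℂ) * (ip (v 0) (v k.succ) * ip (v j.succ) (v 0) *
                P (fun i => v ((j.succAbove i).succ)) (fun i => v ((k.succAbove i).succ))) := by
        intro j k
        rw [hX, tensor_inner, hc]
        simp only [ip_conj]
        ring
      have key : (∑ f : Fin m → Fin d, (starRingEnd ℂ) (∑ j, c j * X j f) * (∑ j, c j * X j f))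
          = (m.factorial : ℂ) * Q := by
        rw [← quad_eq c X]
        rw [hQdef, Finset.sum_comm, Finset.mul_sum]
        refine Finset.sum_congr rfl fun j _ => ?_
        rw [Finset.mul_sum]
        exact Finset.sum_congr rfl fun k _ => e1 k j
      have hS : 0 ≤ (∑ f : Fin m → Fin d,
          (starRingEnd ℂ) (∑ j, c j * X j f) * (∑ j, c j * X j f)).re := by
        rw [Complex.re_sum]
        refine Finset.sum_nonneg fun f _ => ?_
        rw [← Complex.normSq_eq_conj_mul_self]
        exact Complex.normSq_nonneg _
      rw [key, Complex.mul_re] at hS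
      simp only [Complex.natCast_re, Complex.natCast_im, zero_mul, sub_zero] at hS
      nlinarith [(Nat.cast_pos (α := ℝ)).mpr (Nat.factorial_pos m), hS]
    have hprod : ∏ i : Fin (m+2), (ip (v i) (v i)).re
        = (ip (v 0) (v 0)).re * ∏ i : Fin (m+1), (ip ((v ∘ Fin.succ) i) ((v ∘ Fin.succ) i)).re := by
      rw [Fin.prod_univ_succ]
      rfl
    rw [hprod]
    have h2 : (ip (v 0) (v 0)).re * ∏ i : Fin (m+1), (ip ((v ∘ Fin.succ) i) ((v ∘ Fin.succ) i)).re
        ≤ (ip (v 0) (v 0)).re * (P (v ∘ Fin.succ) (v ∘ Fin.succ)).re :=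
      mul_le_mul_of_nonneg_left ih (ip_self_re_nonneg _)
    linarith

end MarcusAux

open MarcusAux

/-- Marcus's permanent analogue of the Hadamard inequality: for a Hermitian positive
semidefinite matrix `A`, the real part of the permanent of `A` is at least the
product of the diagonal entries. -/
theorem re_permanent_ge_prod_diag (n : ℕ) (A : Matrix (Fin n) (Fin n) ℂ)
    (hA : A.IsHermitian) (hA' : A.PosSemidef) :
    (∑ σ : Equiv.Perm (Fin n), ∏ i : Fin n, A i (σ i)).re ≥ ∏ i : Fin n, (A i i).re := by
  obtain ⟨B, hB⟩ : ∃ B : Matrix (Fin n) (Fin n) ℂ, A = Bᴴ * B := by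
    open MatrixOrder in
    obtain ⟨B, hB⟩ := CStarAlgebra.nonneg_iff_eq_star_mul_self.mp hA'.nonneg
    exact ⟨B, hB⟩
  set v : Fin n → Fin n → ℂ := fun i s => B s i with hv
  have hAij : ∀ i j, A i j = ip (v i) (v j) := by
    intro i j
    rw [hB]
    simp [Matrix.mul_apply, ip, Matrix.conjTranspose_apply, hv]
  rw [ge_iff_le]
  simp only [hAij]
  have hP : P v v = ∑ σ : Equiv.Perm (Fin n), ∏ i : Fin n, ip (v i) (v (σ i)) := rfl
  rw [← hP]
  exact main n n v
end
end

section
/- Let ψ₁, ..., ψ_m be unit vectors in ℂ² and let A be their Gram matrix, A_{a b} = ⟨ψ_a, ψ_b⟩. Then Re(∑_{σ ∈ S_m} ∏_{a=1}^m A_{σ(a), a}) ≥ 1. (This is the concrete content of the paper's Corollary that Conjecture C holds for star graphs: the amplitude of a star-shaped tree is, up to complex conjugation, the permanent of the Gram matrix of the unit eigenvectors ψ_{e_a} attached to its edges, and this permanent has real part at least 1.) -/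
open Matrix Finset
open scoped ComplexInnerProductSpace

noncomputable section

namespace StarGramAux

open Finset Polynomial

private lemma amgm {A B c : ℝ} (hA : 0 ≤ A) (hB : 0 ≤ B) (hc : 0 ≤ c) (h : c^2 = A*B) :
    2*c ≤ A + B := by
  nlinarith [sq_nonneg (A - B), sq_nonneg (A + B - 2*c)]

private lemma step (m : ℕ) (x : ℕ → ℂ) (a b : ℂ) (hab : ‖a‖^2 + ‖b‖^2 = 1)
    (hx : ∀ k, m < k → x k = 0)
    (h1 : 1 ≤ ∑ k ∈ range (m+1), (k.factorial * (m-k).factorial : ℝ) * ‖x k‖^2) :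
    1 ≤ ∑ k ∈ range (m+2), (k.factorial * (m+1-k).factorial : ℝ) *
      ‖a * x k + b * (if k = 0 then 0 else x (k-1))‖^2 := by
  set xs : ℕ → ℂ := fun k => if k = 0 then 0 else x (k-1) with hxs
  set u : ℕ → ℝ := fun k => (k.factorial * (m+1-k).factorial : ℝ) * (‖a‖^2 * ‖x k‖^2) with hu_def
  set v : ℕ → ℝ := fun k => (k.factorial * (m+1-k).factorial : ℝ) * (‖b‖^2 * ‖xs k‖^2) with hv_def
  set Af : ℕ → ℝ := fun k => ‖b‖^2 * k * (k.factorial * (m-k).factorial) * ‖x k‖^2 with hA_def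
  set Bf : ℕ → ℝ := fun k => ‖a‖^2 * ((m+1-k : ℕ) : ℝ) * ((k-1).factorial * (m+1-k).factorial) * ‖xs k‖^2 with hB_def
  have key : ∀ k ∈ range (m+2),
      u k + v k - Af k - Bf k ≤
        (k.factorial * (m+1-k).factorial : ℝ) * ‖a * x k + b * xs k‖^2 := by
    intro k hk
    have hkm : k ≤ m + 1 := Nat.lt_succ_iff.mp (mem_range.mp hk)
    by_cases hk0 : k = 0
    · subst hk0
      have h0 : xs 0 = 0 := by simp [hxs]
      simp only [hu_def, hv_def, hA_def, hB_def, h0]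
      rw [mul_zero, add_zero, norm_mul, mul_pow]
      simp
    · by_cases hk1 : k = m + 1
      · subst hk1
        have hx0 : x (m+1) = 0 := hx _ (Nat.lt_succ_self m)
        have hxsk : xs (m+1) = x m := by simp [hxs]
        have h0 : m + 1 - (m+1) = 0 := by omega
        simp only [hu_def, hv_def, hA_def, hB_def, hx0, hxsk, h0]
        rw [mul_zero, zero_add, norm_mul, mul_pow]
        simp
      · -- main case 1 ≤ k ≤ m
        obtain ⟨j, rfl⟩ : ∃ j, k = j + 1 := ⟨k - 1, by omega⟩
        have hjm : j + 1 ≤ m := by omega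
        obtain ⟨i, hi⟩ : ∃ i, m - j = i + 1 := ⟨m - (j+1), by omega⟩
        have e0 : j + 1 - 1 = j := rfl
        have e1 : m + 1 - (j+1) = i + 1 := by omega
        have e2 : m - (j+1) = i := by omega
        have hxsk : xs (j+1) = x j := by simp [hxs]
        simp only [hu_def, hv_def, hA_def, hB_def, hxsk, e0, e1, e2, Nat.factorial_succ]
        have hprod : ((((j:ℝ)+1)*j.factorial * (((i:ℝ)+1)*i.factorial) : ℝ) *
              (‖a‖*‖b‖*‖x (j+1)‖*‖x j‖))^2
            = (‖b‖^2*((j:ℝ)+1)*((((j:ℝ)+1)*j.factorial) * i.factorial)*‖x (j+1)‖^2) *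
              (‖a‖^2*(((i:ℝ)+1))*((j.factorial : ℝ) * (((i:ℝ)+1)*i.factorial))*‖x j‖^2) := by
          ring
        have hamgm := amgm (by positivity) (by positivity) (by positivity) hprod
        have h2 := abs_norm_sub_norm_le (a * x (j+1)) (-(b * x j))
        rw [norm_neg, sub_neg_eq_add] at h2
        have hnorm : (‖a‖*‖x (j+1)‖ - ‖b‖*‖x j‖)^2 ≤ ‖a * x (j+1) + b * x j‖^2 := by
          calc (‖a‖*‖x (j+1)‖ - ‖b‖*‖x j‖)^2
              = |‖a * x (j+1)‖ - ‖b * x j‖|^2 := by rw [sq_abs, norm_mul, norm_mul]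
            _ ≤ ‖a * x (j+1) + b * x j‖^2 := by
                apply pow_le_pow_left₀ (abs_nonneg _) h2
        have hFnn : (0:ℝ) ≤ (((j:ℝ)+1)*j.factorial * (((i:ℝ)+1)*i.factorial)) := by positivity
        have hkey := mul_le_mul_of_nonneg_left hnorm hFnn
        push_cast
        nlinarith [hkey, hamgm]
  have hsum := Finset.sum_le_sum key
  rw [show (∑ k ∈ range (m+2), (u k + v k - Af k - Bf k))
      = ∑ k ∈ range (m+2), u k + ∑ k ∈ range (m+2), v k
        - ∑ k ∈ range (m+2), Af k - ∑ k ∈ range (m+2), Bf k by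
    rw [← Finset.sum_add_distrib, ← Finset.sum_sub_distrib, ← Finset.sum_sub_distrib]] at hsum
  have hu2 : ∑ k ∈ range (m+2), u k = ∑ k ∈ range (m+1), u k := by
    rw [Finset.sum_range_succ]
    simp [hu_def, hx (m+1) (Nat.lt_succ_self m)]
  have hA2 : ∑ k ∈ range (m+2), Af k = ∑ k ∈ range (m+1), Af k := by
    rw [Finset.sum_range_succ]
    simp [hA_def, hx (m+1) (Nat.lt_succ_self m)]
  have hv2 : ∑ k ∈ range (m+2), v k = ∑ k ∈ range (m+1), v (k+1) := by
    rw [Finset.sum_range_succ']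
    have : v 0 = 0 := by simp [hv_def, hxs]
    rw [this, add_zero]
  have hB2 : ∑ k ∈ range (m+2), Bf k = ∑ k ∈ range (m+1), Bf (k+1) := by
    rw [Finset.sum_range_succ']
    have : Bf 0 = 0 := by simp [hB_def, hxs]
    rw [this, add_zero]
  have hmain : ∑ k ∈ range (m+1), u k + ∑ k ∈ range (m+1), v (k+1)
      - ∑ k ∈ range (m+1), Af k - ∑ k ∈ range (m+1), Bf (k+1)
      = ∑ k ∈ range (m+1), (k.factorial * (m-k).factorial : ℝ) * ‖x k‖^2 := by
    rw [← Finset.sum_add_distrib, ← Finset.sum_sub_distrib, ← Finset.sum_sub_distrib]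
    apply Finset.sum_congr rfl
    intro k hk
    have hkm : k ≤ m := Nat.lt_succ_iff.mp (mem_range.mp hk)
    have e1 : m + 1 - k = (m - k) + 1 := by omega
    have e2 : m + 1 - (k+1) = m - k := by omega
    have e3 : k + 1 - 1 = k := rfl
    have hxsk : xs (k+1) = x k := by simp [hxs]
    simp only [hu_def, hv_def, hA_def, hB_def, hxsk, e1, e2, e3, Nat.factorial_succ]
    push_cast
    linear_combination ((k.factorial : ℝ) * ((m-k).factorial : ℝ) * ‖x k‖^2) * hab
  rw [hu2, hv2, hA2, hB2, hmain] at hsum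
  calc (1:ℝ) ≤ ∑ k ∈ range (m+1), (k.factorial * (m-k).factorial : ℝ) * ‖x k‖^2 := h1
    _ ≤ ∑ k ∈ range (m+2), (k.factorial * (m+1-k).factorial : ℝ) * ‖a * x k + b * xs k‖^2 := hsum
    _ = _ := by
        apply Finset.sum_congr rfl
        intro k _
        rw [hxs]

private lemma ineq (m : ℕ) (α β : Fin m → ℂ) (h : ∀ a, ‖α a‖^2 + ‖β a‖^2 = 1) :
    1 ≤ ∑ k ∈ range (m+1), (k.factorial * (m-k).factorial : ℝ) *
      ‖(∏ a : Fin m, (C (α a) + C (β a) * X)).coeff k‖^2 := by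
  induction m with
  | zero => simp
  | succ n ih =>
    specialize ih (fun a => α a.castSucc) (fun a => β a.castSucc) (fun a => h a.castSucc)
    set P : Polynomial ℂ := ∏ a : Fin n, (C (α a.castSucc) + C (β a.castSucc) * X) with hP
    have hdeg : ∀ k, n < k → P.coeff k = 0 := by
      intro k hk
      apply Polynomial.coeff_eq_zero_of_natDegree_lt
      calc P.natDegree ≤ ∑ a : Fin n, (C (α a.castSucc) + C (β a.castSucc) * X).natDegree :=
            Polynomial.natDegree_prod_le _ _
        _ ≤ ∑ _a : Fin n, 1 := by
            apply Finset.sum_le_sum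
            intro a _
            apply le_trans (Polynomial.natDegree_add_le _ _)
            simp [Polynomial.natDegree_C]
            exact Polynomial.natDegree_C_mul_le _ _ |>.trans (by simp)
        _ = n := by simp
        _ < k := hk
    have hQ : (∏ a : Fin (n+1), (C (α a) + C (β a) * X))
        = P * (C (α (Fin.last n)) + C (β (Fin.last n)) * X) := by
      rw [hP, Fin.prod_univ_castSucc]
    have hcoeff : ∀ k, (∏ a : Fin (n+1), (C (α a) + C (β a) * X)).coeff k
        = α (Fin.last n) * P.coeff k
          + β (Fin.last n) * (if k = 0 then 0 else P.coeff (k-1)) := by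
      intro k
      rw [hQ, mul_add, ← mul_assoc, Polynomial.coeff_add, Polynomial.coeff_mul_C]
      cases k with
      | zero => simp [mul_comm]
      | succ j => rw [Polynomial.coeff_mul_X, Polynomial.coeff_mul_C]
                  simp [mul_comm]
    have := step n P.coeff (α (Fin.last n)) (β (Fin.last n)) (h (Fin.last n)) hdeg ih
    calc (1:ℝ) ≤ _ := this
      _ = _ := by
          apply Finset.sum_congr rfl
          intro k _
          rw [hcoeff k]

variable {m : ℕ}

private def cnt (f : Fin m → Fin 2) : ℕ := (univ.filter fun a => f a = 1).card

private lemma fin2_eq_zero (i : Fin 2) (h : ¬ i = 1) : i = 0 := by omega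

private lemma cnt_le (f : Fin m → Fin 2) : cnt f ≤ m := by
  simpa [cnt] using (Finset.card_filter_le univ (fun a => f a = 1))

private lemma cnt_comp (f : Fin m → Fin 2) (σ : Equiv.Perm (Fin m)) :
    cnt (f ∘ σ) = cnt f := by
  apply Finset.card_nbij' σ σ.symm
  · intro a ha
    simp only [Finset.mem_coe, mem_filter, mem_univ, true_and, Function.comp_apply] at ha ⊢
    exact ha
  · intro a ha
    simp only [Finset.mem_coe, mem_filter, mem_univ, true_and, Function.comp_apply] at ha ⊢
    simpa using ha
  · intro a _; simp
  · intro a _; simp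

private lemma exists_perm_comp (f g : Fin m → Fin 2) (h : cnt f = cnt g) :
    ∃ σ : Equiv.Perm (Fin m), f ∘ σ = g := by
  have hc1 : Fintype.card {a // g a = 1} = Fintype.card {a // f a = 1} := by
    rw [Fintype.card_subtype, Fintype.card_subtype]
    exact h.symm
  have hc0 : Fintype.card {a // ¬ g a = 1} = Fintype.card {a // ¬ f a = 1} := by
    rw [Fintype.card_subtype_compl, Fintype.card_subtype_compl, hc1]
  refine ⟨Equiv.subtypeCongr (Fintype.equivOfCardEq hc1) (Fintype.equivOfCardEq hc0), ?_⟩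
  funext a
  simp only [Function.comp_apply]
  by_cases hga : g a = 1
  · rw [Equiv.subtypeCongr, Equiv.trans_apply, Equiv.trans_apply,
      Equiv.sumCompl_symm_apply_of_pos (p := fun x => g x = 1) hga]
    simp only [Equiv.sumCongr_apply, Sum.map_inl, Equiv.sumCompl_apply_inl]
    rw [hga, (Fintype.equivOfCardEq hc1 ⟨a, hga⟩).2]
  · rw [Equiv.subtypeCongr, Equiv.trans_apply, Equiv.trans_apply,
      Equiv.sumCompl_symm_apply_of_neg (p := fun x => g x = 1) hga]
    simp only [Equiv.sumCongr_apply, Sum.map_inr, Equiv.sumCompl_apply_inr]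
    rw [fin2_eq_zero _ hga, fin2_eq_zero _ (Fintype.equivOfCardEq hc0 ⟨a, hga⟩).2]

/-- the stabilizer equiv -/
private def stabEquiv (g : Fin m → Fin 2) :
    {σ : Equiv.Perm (Fin m) // g ∘ σ = g} ≃
      Equiv.Perm {a // g a = 1} × Equiv.Perm {a // ¬ g a = 1} where
  toFun σ := ⟨σ.1.subtypePerm (fun a => by
      constructor
      · intro ha; rw [← show g (σ.1 a) = g a from congrFun σ.2 a]; exact ha
      · intro ha; rw [show g (σ.1 a) = g a from congrFun σ.2 a]; exact ha),
    σ.1.subtypePerm (fun a => by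
      constructor
      · intro ha; rw [← show g (σ.1 a) = g a from congrFun σ.2 a]; exact ha
      · intro ha; rw [show g (σ.1 a) = g a from congrFun σ.2 a]; exact ha)⟩
  invFun := fun (ep, en) => ⟨ep.subtypeCongr en, by
    funext a
    by_cases ha : g a = 1
    · rw [Function.comp_apply, Equiv.Perm.subtypeCongr.left_apply ep en ha]
      rw [(ep ⟨a, ha⟩).2, ha]
    · rw [Function.comp_apply, Equiv.Perm.subtypeCongr.right_apply ep en ha]
      rw [fin2_eq_zero _ (en ⟨a, ha⟩).2, fin2_eq_zero _ ha]⟩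
  left_inv σ := by
    apply Subtype.ext
    apply Equiv.ext
    intro a
    dsimp only
    by_cases ha : g a = 1
    · rw [Equiv.Perm.subtypeCongr.left_apply (p := fun x => g x = 1) _ _ ha]
      simp [Equiv.Perm.subtypePerm_apply]
    · rw [Equiv.Perm.subtypeCongr.right_apply (p := fun x => g x = 1) _ _ ha]
      simp [Equiv.Perm.subtypePerm_apply]
  right_inv := fun (ep, en) => by
    refine Prod.ext ?_ ?_ <;> apply Equiv.ext <;> intro a <;> apply Subtype.ext <;> dsimp only
    · simp only [Equiv.Perm.subtypePerm_apply]
      rw [Equiv.Perm.subtypeCongr.left_apply ep en a.2]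
    · simp only [Equiv.Perm.subtypePerm_apply]
      rw [Equiv.Perm.subtypeCongr.right_apply ep en a.2]

private lemma stab_card (g : Fin m → Fin 2) :
    (univ.filter fun σ : Equiv.Perm (Fin m) => g ∘ σ = g).card
      = (cnt g).factorial * (m - cnt g).factorial := by
  have h1 : (univ.filter fun σ : Equiv.Perm (Fin m) => g ∘ σ = g).card
      = Fintype.card {σ : Equiv.Perm (Fin m) // g ∘ σ = g} := by
    rw [Fintype.card_subtype]
  rw [h1, Fintype.card_congr (stabEquiv g), Fintype.card_prod,
    Fintype.card_perm, Fintype.card_perm, Fintype.card_subtype,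
    Fintype.card_subtype_compl, Fintype.card_subtype, Fintype.card_fin]
  rfl

private lemma coset_card (f g : Fin m → Fin 2) (h : cnt f = cnt g) :
    (univ.filter fun σ : Equiv.Perm (Fin m) => f ∘ σ = g).card
      = (cnt f).factorial * (m - cnt f).factorial := by
  obtain ⟨σ0, hσ0⟩ := exists_perm_comp f g h
  have hcard : (univ.filter fun σ : Equiv.Perm (Fin m) => f ∘ σ = g).card
      = (univ.filter fun σ : Equiv.Perm (Fin m) => g ∘ σ = g).card := by
    apply Finset.card_nbij' (fun σ => σ0⁻¹ * σ) (fun τ => σ0 * τ)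
    · intro σ hσ
      simp only [Finset.mem_coe, mem_filter, mem_univ, true_and] at hσ ⊢
      funext a
      have h1 : g ((σ0⁻¹ * σ) a) = f (σ0 ((σ0⁻¹ * σ) a)) := (congrFun hσ0 _).symm
      rw [Function.comp_apply, h1]
      simp only [Equiv.Perm.mul_apply, Equiv.Perm.inv_def, Equiv.apply_symm_apply]
      exact congrFun hσ a
    · intro τ hτ
      simp only [Finset.mem_coe, mem_filter, mem_univ, true_and] at hτ ⊢
      funext a
      rw [Function.comp_apply]
      simp only [Equiv.Perm.mul_apply]
      rw [show f (σ0 (τ a)) = g (τ a) from congrFun hσ0 _]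
      exact congrFun hτ a
    · intro σ _; simp [mul_assoc]
    · intro τ _; simp [← mul_assoc]
  rw [hcard, stab_card, h]

private def tprod (ψ : Fin m → EuclideanSpace ℂ (Fin 2)) (f : Fin m → Fin 2) : ℂ :=
  ∏ a, ψ a (f a)

private def Ek (ψ : Fin m → EuclideanSpace ℂ (Fin 2)) (k : ℕ) : ℂ :=
  ∑ f ∈ univ.filter (fun f : Fin m → Fin 2 => cnt f = k), tprod ψ f

variable (ψ : Fin m → EuclideanSpace ℂ (Fin 2))

private lemma sum_perm_tprod (f : Fin m → Fin 2) :
    ∑ σ : Equiv.Perm (Fin m), tprod ψ (f ∘ σ)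
      = (((cnt f).factorial * (m - cnt f).factorial : ℕ) : ℂ) * Ek ψ (cnt f) := by
  rw [← Finset.sum_fiberwise univ (fun σ : Equiv.Perm (Fin m) => f ∘ σ)
    (fun σ => tprod ψ (f ∘ σ))]
  have inner : ∀ g : Fin m → Fin 2,
      ∑ σ ∈ univ.filter (fun σ : Equiv.Perm (Fin m) => f ∘ σ = g), tprod ψ (f ∘ σ)
        = (if cnt g = cnt f then (((cnt f).factorial * (m - cnt f).factorial : ℕ) : ℂ) else 0)
            * tprod ψ g := by
    intro g
    by_cases hg : cnt g = cnt f
    · rw [if_pos hg]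
      rw [Finset.sum_congr rfl (fun σ hσ => by rw [(mem_filter.mp hσ).2] :
        ∀ σ ∈ univ.filter (fun σ : Equiv.Perm (Fin m) => f ∘ σ = g),
          tprod ψ (f ∘ σ) = tprod ψ g)]
      rw [Finset.sum_const, coset_card f g hg.symm, nsmul_eq_mul]
    · rw [if_neg hg]
      have hempty : univ.filter (fun σ : Equiv.Perm (Fin m) => f ∘ σ = g) = ∅ := by
        apply Finset.filter_eq_empty_iff.mpr
        intro σ _ hc
        exact hg (by rw [← hc, cnt_comp])
      rw [hempty]
      simp
  rw [Finset.sum_congr rfl (fun g _ => inner g)]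
  calc ∑ g : Fin m → Fin 2,
        (if cnt g = cnt f then (((cnt f).factorial * (m - cnt f).factorial : ℕ) : ℂ) else 0)
          * tprod ψ g
      = ∑ g : Fin m → Fin 2, (if cnt g = cnt f then
          (((cnt f).factorial * (m - cnt f).factorial : ℕ) : ℂ) * tprod ψ g else 0) := by
        apply Finset.sum_congr rfl
        intro g _
        by_cases hg : cnt g = cnt f <;> simp [hg]
    _ = ∑ g ∈ univ.filter (fun g : Fin m → Fin 2 => cnt g = cnt f),
          (((cnt f).factorial * (m - cnt f).factorial : ℕ) : ℂ) * tprod ψ g := by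
        rw [Finset.sum_filter]
    _ = _ := by rw [← Finset.mul_sum, Ek]

private lemma perm_sum_eq :
    (∑ σ : Equiv.Perm (Fin m), ∏ a, (⟪ψ (σ a), ψ a⟫ : ℂ))
      = ∑ k ∈ range (m+1), ((k.factorial * (m-k).factorial : ℕ) : ℂ)
          * ((starRingEnd ℂ) (Ek ψ k) * Ek ψ k) := by
  have hinner : ∀ (b a : Fin m), (⟪ψ b, ψ a⟫ : ℂ)
      = ∑ i : Fin 2, (starRingEnd ℂ) (ψ b i) * ψ a i := by
    intro b a
    rw [PiLp.inner_apply]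
    apply Finset.sum_congr rfl
    intro i _
    rw [RCLike.inner_apply, mul_comm]
  calc ∑ σ : Equiv.Perm (Fin m), ∏ a, (⟪ψ (σ a), ψ a⟫ : ℂ)
      = ∑ σ : Equiv.Perm (Fin m), ∑ f : Fin m → Fin 2,
          (starRingEnd ℂ) (tprod ψ (f ∘ ⇑σ⁻¹)) * tprod ψ f := by
        apply Finset.sum_congr rfl
        intro σ _
        rw [Finset.prod_congr rfl (fun a _ => hinner (σ a) a), Finset.prod_univ_sum]
        rw [Fintype.piFinset_univ]
        apply Finset.sum_congr rfl
        intro f _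
        rw [Finset.prod_mul_distrib]
        congr 1
        rw [← map_prod]
        congr 1
        calc ∏ a, ψ (σ a) (f a)
            = ∏ a, ψ (σ a) (f (σ⁻¹ (σ a))) := by
              apply Finset.prod_congr rfl
              intro a _
              rw [Equiv.Perm.inv_def, Equiv.symm_apply_apply]
          _ = ∏ b, ψ b (f (σ⁻¹ b)) := Equiv.prod_comp σ (fun b => ψ b (f (σ⁻¹ b)))
          _ = tprod ψ (f ∘ ⇑σ⁻¹) := rfl
    _ = ∑ f : Fin m → Fin 2, ∑ σ : Equiv.Perm (Fin m),
          (starRingEnd ℂ) (tprod ψ (f ∘ ⇑σ⁻¹)) * tprod ψ f := Finset.sum_comm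
    _ = ∑ f : Fin m → Fin 2,
          (((cnt f).factorial * (m - cnt f).factorial : ℕ) : ℂ)
            * (starRingEnd ℂ) (Ek ψ (cnt f)) * tprod ψ f := by
        apply Finset.sum_congr rfl
        intro f _
        rw [← Finset.sum_mul]
        congr 1
        have hreindex : ∑ σ : Equiv.Perm (Fin m), (starRingEnd ℂ) (tprod ψ (f ∘ ⇑σ⁻¹))
            = ∑ σ : Equiv.Perm (Fin m), (starRingEnd ℂ) (tprod ψ (f ∘ ⇑σ)) := by
          exact Equiv.sum_comp (Equiv.inv (Equiv.Perm (Fin m)))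
            (fun σ => (starRingEnd ℂ) (tprod ψ (f ∘ ⇑σ)))
        rw [hreindex, ← map_sum, sum_perm_tprod, _root_.map_mul, map_natCast]
    _ = ∑ k ∈ range (m+1), ∑ f ∈ univ.filter (fun f : Fin m → Fin 2 => cnt f = k),
          (((cnt f).factorial * (m - cnt f).factorial : ℕ) : ℂ)
            * (starRingEnd ℂ) (Ek ψ (cnt f)) * tprod ψ f := by
        rw [Finset.sum_fiberwise_of_maps_to
          (fun f _ => mem_range.mpr (Nat.lt_succ_of_le (cnt_le f)))]
    _ = _ := by
        apply Finset.sum_congr rfl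
        intro k hk
        rw [Finset.sum_congr rfl (fun f hf => by rw [(mem_filter.mp hf).2] :
          ∀ f ∈ univ.filter (fun f : Fin m → Fin 2 => cnt f = k),
            (((cnt f).factorial * (m - cnt f).factorial : ℕ) : ℂ)
              * (starRingEnd ℂ) (Ek ψ (cnt f)) * tprod ψ f
            = ((k.factorial * (m - k).factorial : ℕ) : ℂ)
              * (starRingEnd ℂ) (Ek ψ k) * tprod ψ f)]
        rw [← Finset.mul_sum, mul_assoc]
        rfl


lemma Ek_eq_coeff (k : ℕ) :
    Ek ψ k = (∏ a, (Polynomial.C (ψ a 0) + Polynomial.C (ψ a 1) * Polynomial.X)).coeff k := by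
  have hfin2 : ∀ i : Fin 2, (i : ℕ) = if i = 1 then 1 else 0 := by decide
  have h1 : (∏ a : Fin m, (Polynomial.C (ψ a 0) + Polynomial.C (ψ a 1) * Polynomial.X))
      = ∑ f : Fin m → Fin 2, Polynomial.C (tprod ψ f) * Polynomial.X ^ (cnt f) := by
    have hfac : ∀ a : Fin m, (Polynomial.C (ψ a 0) + Polynomial.C (ψ a 1) * Polynomial.X)
        = ∑ i : Fin 2, Polynomial.C (ψ a i) * Polynomial.X ^ (i : ℕ) := by
      intro a
      rw [Fin.sum_univ_two]
      simp
    rw [Finset.prod_congr rfl (fun a _ => hfac a), Finset.prod_univ_sum, Fintype.piFinset_univ]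
    apply Finset.sum_congr rfl
    intro f _
    rw [Finset.prod_mul_distrib, ← map_prod, Finset.prod_pow_eq_pow_sum]
    have hcnt : cnt f = ∑ a, ((f a : ℕ)) := by
      rw [cnt, Finset.card_filter]
      exact Finset.sum_congr rfl (fun a _ => (hfin2 (f a)).symm)
    rw [hcnt]
    rfl
  rw [h1, Polynomial.finset_sum_coeff, Ek, Finset.sum_filter]
  apply Finset.sum_congr rfl
  intro f _
  rw [Polynomial.coeff_C_mul, Polynomial.coeff_X_pow]
  by_cases h : cnt f = k
  · simp [h]
  · rw [if_neg (fun hh : k = cnt f => h hh.symm), mul_zero, if_neg h]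

end StarGramAux

open StarGramAux in
/-- If `ψ₁, …, ψ_m` are unit vectors in `ℂ²` and `A` is their Gram matrix
`A_{a b} = ⟨ψ_a, ψ_b⟩`, then the permanent `∑_{σ} ∏_a A_{σ(a), a}` has real part
at least `1`. -/
theorem re_permanent_gram_ge_one (m : ℕ) (ψ : Fin m → EuclideanSpace ℂ (Fin 2))
    (hψ : ∀ a, ‖ψ a‖ = 1) (A : Matrix (Fin m) (Fin m) ℂ)
    (hA : ∀ a b, A a b = ⟪ψ a, ψ b⟫) :
    (∑ σ : Equiv.Perm (Fin m), ∏ a : Fin m, A (σ a) a).re ≥ 1 := by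
  have hA' : (∑ σ : Equiv.Perm (Fin m), ∏ a : Fin m, A (σ a) a)
      = ∑ σ : Equiv.Perm (Fin m), ∏ a : Fin m, (⟪ψ (σ a), ψ a⟫ : ℂ) := by
    apply Finset.sum_congr rfl
    intro σ _
    exact Finset.prod_congr rfl (fun a _ => hA (σ a) a)
  rw [ge_iff_le, hA', perm_sum_eq ψ, Complex.re_sum]
  have hterm : ∀ k ∈ range (m+1), (((k.factorial * (m-k).factorial : ℕ) : ℂ)
      * ((starRingEnd ℂ) (Ek ψ k) * Ek ψ k)).re
      = (k.factorial * (m-k).factorial : ℝ) * ‖Ek ψ k‖^2 := by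
    intro k _
    have h2 : (starRingEnd ℂ) (Ek ψ k) * Ek ψ k = ((‖Ek ψ k‖^2 : ℝ) : ℂ) := by
      rw [mul_comm, Complex.mul_conj, Complex.normSq_eq_norm_sq]
    rw [h2]
    simp only [Complex.mul_re, Complex.natCast_re, Complex.natCast_im, Complex.ofReal_re,
      Complex.ofReal_im, mul_zero, zero_mul, sub_zero]
    push_cast
    ring
  rw [Finset.sum_congr rfl hterm]
  have hnorm : ∀ a, ‖ψ a 0‖^2 + ‖ψ a 1‖^2 = 1 := by
    intro a
    have h := hψ a
    rw [EuclideanSpace.norm_eq, Real.sqrt_eq_one, Fin.sum_univ_two] at h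
    exact h
  have hineq := ineq m (fun a => ψ a 0) (fun a => ψ a 1) hnorm
  calc (1:ℝ) ≤ _ := hineq
    _ = _ := Finset.sum_congr rfl (fun k _ => by rw [← Ek_eq_coeff])
end
end

section
/- Let ∼₁ and ∼₂ be equivalence relations on {1, ..., n}, let P₁ and P₂ be the groups of permutations of {1, ..., n} preserving the equivalence classes of ∼₁ and ∼₂ respectively, and for an n×n complex matrix A set f_{∼₁,∼₂}(A) = ∑_{σ₁ ∈ P₁} ∑_{σ₂ ∈ P₂} ∏_{i=1}^n A_{σ₁(i), σ₂(i)}. If ∼₁ is the discrete equivalence relation (i ∼₁ j iff i = j) and ∼₂ is the indiscrete one (i ∼₂ j for all i, j), then for every Hermitian positive semidefinite A one has Re(f_{∼₁,∼₂}(A)) ≥ |P₁ ∩ P₂| · ∏_{i=1}^n Re(A_{i i}); that is, Conjecture D holds in this case, where it recovers Marcus's permanent inequality. -/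
open Matrix Finset
open scoped ComplexOrder Classical

noncomputable section

/-- Given an equivalence relation `r` on `Fin n`, the set of permutations of `Fin n`
preserving each equivalence class of `r`. -/
def classPerms (n : ℕ) (r : Setoid (Fin n)) : Finset (Equiv.Perm (Fin n)) :=
  Finset.univ.filter fun σ => ∀ i, r.r (σ i) i

/-- The function `f_{∼₁,∼₂}(A) = ∑_{σ₁ ∈ P₁} ∑_{σ₂ ∈ P₂} ∏_i A_{σ₁(i), σ₂(i)}`. -/
def fRel (n : ℕ) (r₁ r₂ : Setoid (Fin n)) (A : Matrix (Fin n) (Fin n) ℂ) : ℂ :=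
  ∑ σ₁ ∈ classPerms n r₁, ∑ σ₂ ∈ classPerms n r₂, ∏ i : Fin n, A (σ₁ i) (σ₂ i)

namespace ConjDAux

local notation "conj'" => starRingEnd ℂ

/-- Exchange a sum over functions and a product. -/
private lemma sum_fun_prod {α β : Type*} [Fintype α] [Fintype β] [DecidableEq α]
    (F : α → β → ℂ) :
    ∑ g : α → β, ∏ s : α, F s (g s) = ∏ s : α, ∑ h : β, F s h := by
  have := Finset.sum_prod_piFinset (Finset.univ : Finset β) F
  rwa [Fintype.piFinset_univ] at this

variable {n : ℕ}

/-- The auxiliary family of vectors: for `k i : Fin n`, a vector indexed by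
`Option (Fin (n+1))`, equal to the `i.succ` column of `B` for `i ≠ k`, and to a unit
vector orthogonal to all columns for `i = k`. -/
private def vv (B : Matrix (Fin (n + 1)) (Fin (n + 1)) ℂ) (k i : Fin n) :
    Option (Fin (n + 1)) → ℂ :=
  fun h => match h with
  | none => if i = k then 1 else 0
  | some g => if i = k then 0 else B g i.succ

/-- The symmetrized tensor of the family `vv B k`. -/
private def SS (B : Matrix (Fin (n + 1)) (Fin (n + 1)) ℂ) (k : Fin n)
    (g : Fin n → Option (Fin (n + 1))) : ℂ :=
  ∑ π : Equiv.Perm (Fin n), ∏ s : Fin n, vv B k (π s) (g s)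

private lemma ip_eq (A B : Matrix (Fin (n + 1)) (Fin (n + 1)) ℂ)
    (hAB : ∀ a b, A a b = ∑ h, conj' (B h a) * B h b) (k j i i' : Fin n) :
    ∑ h : Option (Fin (n + 1)), conj' (vv B k i h) * vv B j i' h =
      if i = k then (if i' = j then 1 else 0)
      else if i' = j then 0 else A i.succ i'.succ := by
  rw [Fintype.sum_option]
  by_cases h1 : i = k <;> by_cases h2 : i' = j <;>
    simp [vv, h1, h2, hAB]

private lemma S_inner (A B : Matrix (Fin (n + 1)) (Fin (n + 1)) ℂ)
    (hAB : ∀ a b, A a b = ∑ h, conj' (B h a) * B h b) (k j : Fin n) :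
    ∑ g : Fin n → Option (Fin (n + 1)), conj' (SS B k g) * SS B j g =
      (n.factorial : ℂ) * ∑ e : Equiv.Perm (Fin n),
        (if e k = j then ∏ i ∈ Finset.univ.erase k, A i.succ (e i).succ else 0) := by
  have key : ∀ σ : Equiv.Perm (Fin n),
      (∏ t : Fin n, ∑ h : Option (Fin (n + 1)), conj' (vv B k t h) * vv B j (σ t) h) =
      (if σ k = j then ∏ i ∈ Finset.univ.erase k, A i.succ (σ i).succ else 0) := by
    intro σ
    rw [← Finset.mul_prod_erase Finset.univ _ (Finset.mem_univ k),
      ip_eq A B hAB k j k (σ k), if_pos rfl]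
    by_cases h : σ k = j
    · rw [if_pos h, if_pos h, one_mul]
      refine Finset.prod_congr rfl fun t ht => ?_
      rw [ip_eq A B hAB k j t (σ t), if_neg (Finset.mem_erase.mp ht).1,
        if_neg (fun hc => (Finset.mem_erase.mp ht).1 (σ.injective (hc.trans h.symm)))]
    · rw [if_neg h, if_neg h, zero_mul]
  calc
    ∑ g : Fin n → Option (Fin (n + 1)), conj' (SS B k g) * SS B j g
      = ∑ g : Fin n → Option (Fin (n + 1)), ∑ π : Equiv.Perm (Fin n),
          ∑ ρ : Equiv.Perm (Fin n),
          ∏ s : Fin n, (conj' (vv B k (π s) (g s)) * vv B j (ρ s) (g s)) := by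
        refine Finset.sum_congr rfl fun g _ => ?_
        rw [SS, SS, map_sum, Finset.sum_mul_sum]
        refine Finset.sum_congr rfl fun π _ => Finset.sum_congr rfl fun ρ _ => ?_
        rw [map_prod, ← Finset.prod_mul_distrib]
    _ = ∑ π : Equiv.Perm (Fin n), ∑ ρ : Equiv.Perm (Fin n),
          ∑ g : Fin n → Option (Fin (n + 1)),
          ∏ s : Fin n, (conj' (vv B k (π s) (g s)) * vv B j (ρ s) (g s)) := by
        rw [Finset.sum_comm]
        exact Finset.sum_congr rfl fun π _ => Finset.sum_comm
    _ = ∑ π : Equiv.Perm (Fin n), ∑ ρ : Equiv.Perm (Fin n),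
          ∏ s : Fin n, ∑ h : Option (Fin (n + 1)),
            conj' (vv B k (π s) h) * vv B j (ρ s) h := by
        refine Finset.sum_congr rfl fun π _ => Finset.sum_congr rfl fun ρ _ => ?_
        exact sum_fun_prod (fun s h => conj' (vv B k (π s) h) * vv B j (ρ s) h)
    _ = ∑ π : Equiv.Perm (Fin n), ∑ σ : Equiv.Perm (Fin n),
          ∏ t : Fin n, ∑ h : Option (Fin (n + 1)),
            conj' (vv B k t h) * vv B j (σ t) h := by
        refine Finset.sum_congr rfl fun π _ => ?_
        refine (Fintype.sum_equiv (Equiv.mulRight π) _ _ fun σ => ?_).symm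
        rw [← Equiv.prod_comp π
          (fun t => ∑ h : Option (Fin (n + 1)), conj' (vv B k t h) * vv B j (σ t) h)]
        refine Finset.prod_congr rfl fun s _ => ?_
        simp [Equiv.Perm.mul_apply]
    _ = (n.factorial : ℂ) * ∑ e : Equiv.Perm (Fin n),
          (if e k = j then ∏ i ∈ Finset.univ.erase k, A i.succ (e i).succ else 0) := by
        simp only [key]
        rw [Finset.sum_const, Finset.card_univ, Fintype.card_perm, Fintype.card_fin,
          nsmul_eq_mul]

/-- Nonnegativity of the real part of the "off-diagonal" term `R`. -/
private lemma R_re_nonneg (A : Matrix (Fin (n + 1)) (Fin (n + 1)) ℂ) (hA : A.PosSemidef) :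
    0 ≤ (∑ q : Fin n, ∑ e : Equiv.Perm (Fin n),
      A 0 q.succ * ∏ i : Fin n,
        A i.succ (if e i = q then (0 : Fin (n + 1)) else (e i).succ)).re := by
  obtain ⟨B, hB⟩ : ∃ B : Matrix _ _ ℂ, A = Bᴴ * B := by
    open scoped MatrixOrder in
    exact CStarAlgebra.nonneg_iff_eq_star_mul_self.mp hA.nonneg
  have hAB : ∀ a b, A a b = ∑ h, conj' (B h a) * B h b := by
    intro a b
    rw [hB]
    simp [Matrix.mul_apply, Matrix.conjTranspose_apply]
  have herm : ∀ a b, A a b = conj' (A b a) := fun a b => (hA.1.apply a b).symm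
  set R : ℂ := ∑ q : Fin n, ∑ e : Equiv.Perm (Fin n),
      A 0 q.succ * ∏ i : Fin n,
        A i.succ (if e i = q then (0 : Fin (n + 1)) else (e i).succ) with hRdef
  set Pm : Fin n → Fin n → ℂ := fun k j => ∑ e : Equiv.Perm (Fin n),
      (if e k = j then ∏ i ∈ Finset.univ.erase k, A i.succ (e i).succ else 0) with hPm
  have hR2 : R = ∑ k : Fin n, ∑ j : Fin n,
      conj' (A j.succ 0) * A k.succ 0 * Pm k j := by
    rw [hRdef, Finset.sum_comm]
    have step1 : ∀ e : Equiv.Perm (Fin n),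
        (∑ q : Fin n, A 0 q.succ * ∏ i : Fin n,
          A i.succ (if e i = q then (0 : Fin (n + 1)) else (e i).succ)) =
        ∑ k : Fin n, conj' (A (e k).succ 0) *
          (A k.succ 0 * ∏ i ∈ Finset.univ.erase k, A i.succ (e i).succ) := by
      intro e
      rw [← Equiv.sum_comp e (fun q => A 0 q.succ * ∏ i : Fin n,
        A i.succ (if e i = q then (0 : Fin (n + 1)) else (e i).succ))]
      refine Finset.sum_congr rfl fun k _ => ?_
      have hif : ∀ i : Fin n, (if e i = e k then (0 : Fin (n + 1)) else (e i).succ) =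
          (if i = k then (0 : Fin (n + 1)) else (e i).succ) := by
        intro i; by_cases h : i = k
        · rw [if_pos (by rw [h]), if_pos h]
        · rw [if_neg (fun hc => h (e.injective hc)), if_neg h]
      simp only [hif]
      rw [← herm]
      congr 1
      rw [← Finset.mul_prod_erase Finset.univ _ (Finset.mem_univ k), if_pos rfl]
      congr 1
      refine Finset.prod_congr rfl fun t ht => ?_
      rw [if_neg (Finset.mem_erase.mp ht).1]
    simp only [step1]
    rw [Finset.sum_comm]
    refine Finset.sum_congr rfl fun k _ => ?_
    have expand : ∀ e : Equiv.Perm (Fin n),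
        conj' (A (e k).succ 0) *
          (A k.succ 0 * ∏ i ∈ Finset.univ.erase k, A i.succ (e i).succ) =
        ∑ j : Fin n, if e k = j then conj' (A j.succ 0) * A k.succ 0 *
          (∏ i ∈ Finset.univ.erase k, A i.succ (e i).succ) else 0 := by
      intro e
      rw [Finset.sum_ite_eq, if_pos (Finset.mem_univ _)]
      ring
    simp only [expand]
    rw [Finset.sum_comm]
    refine Finset.sum_congr rfl fun j _ => ?_
    simp only [hPm, Finset.mul_sum]
    refine Finset.sum_congr rfl fun e _ => ?_
    by_cases h : e k = j
    · rw [if_pos h, if_pos h]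
    · rw [if_neg h, if_neg h, mul_zero]
  set Z : (Fin n → Option (Fin (n + 1))) → ℂ :=
    fun g => ∑ k : Fin n, conj' (A k.succ 0) * SS B k g with hZ
  have hstep : ∀ g, conj' (Z g) * Z g = ∑ k : Fin n, ∑ j : Fin n,
      conj' (A j.succ 0) * A k.succ 0 * (conj' (SS B k g) * SS B j g) := by
    intro g
    rw [hZ]
    simp only
    rw [map_sum, Finset.sum_mul_sum]
    refine Finset.sum_congr rfl fun k _ => Finset.sum_congr rfl fun j _ => ?_
    rw [_root_.map_mul, Complex.conj_conj]
    ring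
  have hR3 : (n.factorial : ℂ) * R = ∑ g : Fin n → Option (Fin (n + 1)),
      conj' (Z g) * Z g := by
    symm
    calc ∑ g : Fin n → Option (Fin (n + 1)), conj' (Z g) * Z g
        = ∑ g : Fin n → Option (Fin (n + 1)), ∑ k : Fin n, ∑ j : Fin n,
            conj' (A j.succ 0) * A k.succ 0 * (conj' (SS B k g) * SS B j g) :=
          Finset.sum_congr rfl fun g _ => hstep g
      _ = ∑ k : Fin n, ∑ j : Fin n, conj' (A j.succ 0) * A k.succ 0 *
            ∑ g : Fin n → Option (Fin (n + 1)), conj' (SS B k g) * SS B j g := by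
          rw [Finset.sum_comm]
          refine Finset.sum_congr rfl fun k _ => ?_
          rw [Finset.sum_comm]
          refine Finset.sum_congr rfl fun j _ => ?_
          rw [Finset.mul_sum]
      _ = ∑ k : Fin n, ∑ j : Fin n, conj' (A j.succ 0) * A k.succ 0 *
            ((n.factorial : ℂ) * Pm k j) := by
          refine Finset.sum_congr rfl fun k _ => Finset.sum_congr rfl fun j _ => ?_
          rw [S_inner A B hAB k j]
      _ = (n.factorial : ℂ) * R := by
          rw [hR2, Finset.mul_sum]
          refine Finset.sum_congr rfl fun k _ => ?_
          rw [Finset.mul_sum]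
          refine Finset.sum_congr rfl fun j _ => ?_
          ring
  have re_eq : ((n.factorial : ℂ) * R).re =
      ∑ g : Fin n → Option (Fin (n + 1)), Complex.normSq (Z g) := by
    rw [hR3, Complex.re_sum]
    refine Finset.sum_congr rfl fun g _ => ?_
    rw [← Complex.normSq_eq_conj_mul_self, Complex.ofReal_re]
  have hfac : ((n.factorial : ℂ) * R).re = (n.factorial : ℝ) * R.re := by
    simp [Complex.mul_re]
  have hnn : 0 ≤ (n.factorial : ℝ) * R.re := by
    rw [← hfac, re_eq]
    exact Finset.sum_nonneg fun g _ => Complex.normSq_nonneg _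
  have hfacpos : (0 : ℝ) < (n.factorial : ℝ) := by
    exact_mod_cast Nat.factorial_pos n
  nlinarith [hnn, hfacpos]

/-- Marcus's permanent inequality. -/
private lemma marcus : ∀ (m : ℕ) (A : Matrix (Fin m) (Fin m) ℂ), A.PosSemidef →
    (∏ i, (A i i).re) ≤ (∑ σ : Equiv.Perm (Fin m), ∏ i, A i (σ i)).re := by
  intro m
  induction m with
  | zero =>
      intro A _
      simp
  | succ n ih =>
      intro A hA
      obtain ⟨B, hB⟩ : ∃ B : Matrix _ _ ℂ, A = Bᴴ * B := by
        open scoped MatrixOrder in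
        exact CStarAlgebra.nonneg_iff_eq_star_mul_self.mp hA.nonneg
      have hAB : ∀ a b, A a b = ∑ h, conj' (B h a) * B h b := by
        intro a b
        rw [hB]
        simp [Matrix.mul_apply, Matrix.conjTranspose_apply]
      have hdr : ∀ a, 0 ≤ (A a a).re ∧ (A a a).im = 0 := by
        intro a
        have hre : A a a = ((∑ h, Complex.normSq (B h a) : ℝ) : ℂ) := by
          rw [hAB a a]
          push_cast
          refine Finset.sum_congr rfl fun h _ => ?_
          rw [← Complex.normSq_eq_conj_mul_self]
        constructor
        · rw [hre, Complex.ofReal_re]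
          exact Finset.sum_nonneg fun h _ => Complex.normSq_nonneg _
        · rw [hre, Complex.ofReal_im]
      set A' : Matrix (Fin n) (Fin n) ℂ := A.submatrix Fin.succ Fin.succ with hA'
      have hA'psd : A'.PosSemidef := hA.submatrix Fin.succ
      set T : ℂ := ∑ e : Equiv.Perm (Fin n), ∏ i, A' i (e i) with hTdef
      have hsplit : ∑ σ : Equiv.Perm (Fin (n + 1)), ∏ i, A i (σ i)
          = A 0 0 * T
            + ∑ q : Fin n, ∑ e : Equiv.Perm (Fin n),
              A 0 q.succ * ∏ i : Fin n,
                A i.succ (if e i = q then (0 : Fin (n + 1)) else (e i).succ) := by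
        rw [← Equiv.sum_comp Equiv.Perm.decomposeFin.symm
          (fun σ : Equiv.Perm (Fin (n + 1)) => ∏ i, A i (σ i)),
          Fintype.sum_prod_type, Fin.sum_univ_succ]
        congr 1
        · rw [hTdef, Finset.mul_sum]
          refine Finset.sum_congr rfl fun e _ => ?_
          rw [Fin.prod_univ_succ]
          simp [Equiv.swap_self, Matrix.submatrix_apply, hA']
        · refine Finset.sum_congr rfl fun q _ => Finset.sum_congr rfl fun e _ => ?_
          have hz : Equiv.Perm.decomposeFin.symm (q.succ, e) 0 = q.succ :=
            Equiv.Perm.decomposeFin_symm_apply_zero _ _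
          rw [Fin.prod_univ_succ, hz]
          congr 1
          refine Finset.prod_congr rfl fun i _ => ?_
          rw [Equiv.Perm.decomposeFin_symm_apply_succ]
          by_cases h : e i = q
          · rw [if_pos h, h, Equiv.swap_apply_right]
          · rw [if_neg h,
              Equiv.swap_apply_of_ne_of_ne (Fin.succ_ne_zero _)
                (fun hc => h (Fin.succ_injective _ hc))]
      rw [hsplit, Complex.add_re]
      have h1 : (A 0 0 * T).re = (A 0 0).re * T.re := by
        rw [Complex.mul_re, (hdr 0).2, zero_mul, sub_zero]
      have h2 : ∏ i : Fin (n + 1), (A i i).re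
          = (A 0 0).re * ∏ i : Fin n, (A' i i).re := by
        rw [Fin.prod_univ_succ]
        rfl
      have h3 : ∏ i : Fin n, (A' i i).re ≤ T.re := ih A' hA'psd
      have h4 : 0 ≤ ∏ i : Fin n, (A' i i).re :=
        Finset.prod_nonneg fun i _ => (hdr i.succ).1
      have h5 := R_re_nonneg A hA
      rw [h1, h2]
      have h6 := mul_le_mul_of_nonneg_left h3 (hdr 0).1
      linarith

end ConjDAux

/-- Conjecture D holds when `∼₁` is the discrete equivalence relation and `∼₂` the
indiscrete one: for every Hermitian positive semidefinite `A`,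
`Re(f_{∼₁,∼₂}(A)) ≥ |P₁ ∩ P₂| ⬝ ∏_i Re(A_{i i})` (Marcus's permanent inequality). -/
theorem conjectureD_discrete_indiscrete (n : ℕ) (r₁ r₂ : Setoid (Fin n))
    (h₁ : ∀ i j : Fin n, r₁.r i j ↔ i = j) (h₂ : ∀ i j : Fin n, r₂.r i j)
    (A : Matrix (Fin n) (Fin n) ℂ) (hA : A.PosSemidef) :
    (fRel n r₁ r₂ A).re ≥
      ((classPerms n r₁ ∩ classPerms n r₂).card : ℝ) * ∏ i : Fin n, (A i i).re := by
  have hP1 : classPerms n r₁ = {1} := by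
    ext σ
    simp only [classPerms, Finset.mem_filter, Finset.mem_univ, true_and,
      Finset.mem_singleton, h₁]
    constructor
    · intro h
      exact Equiv.ext fun i => h i
    · intro h i
      rw [h]
      rfl
  have hP2 : classPerms n r₂ = Finset.univ := by
    ext σ
    simp [classPerms, h₂]
  have hcard : (classPerms n r₁ ∩ classPerms n r₂).card = 1 := by
    rw [hP1, hP2, Finset.inter_univ, Finset.card_singleton]
  have hf : fRel n r₁ r₂ A = ∑ σ : Equiv.Perm (Fin n), ∏ i, A i (σ i) := by
    rw [fRel, hP1, hP2, Finset.sum_singleton]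
    refine Finset.sum_congr rfl fun σ _ => Finset.prod_congr rfl fun i _ => ?_
    rfl
  rw [hf, hcard]
  simp only [Nat.cast_one, one_mul]
  exact ConjDAux.marcus n A hA
end
end
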